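/- Let G be a symmetry group of the rotating-frame action, i.e., for every g ∈ G the identity det(τ(g)) ρ(g)^{−1} Ω ρ(g) = Ω holds, where Ω ≠ 0 is the antisymmetric matrix associated to ω ∈ ℝ³. Then the line spanned by ω is G-invariant and det(ρ(g)) · (sign of ρ(g) on ω) = det(τ(g)) for all g; i.e., ω is a rotation axis in the sense that det(τ)·det(ρ) = det(v) as one-dimensional representations, where det(v) is the character of ρ restricted to the line ℝω. Conversely, if ω is a rotation axis then det(τ(g)) ρ(g)^{−1} Ω ρ(g) = Ω for all g. -/

import Mathlib

open Matrix

lemma cross_mulVec (M : Matrix (Fin 3) (Fin 3) ℝ) (a b : Fin 3 → ℝ) :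
    crossProduct (M *ᵥ a) (M *ᵥ b) = Mᵀ.adjugate *ᵥ crossProduct a b := by
  funext i
  fin_cases i <;>
  simp [crossProduct, Matrix.mulVec, Matrix.adjugate_fin_three, dotProduct,
    Fin.sum_univ_three, Matrix.transpose] <;> ring

lemma cross_inj (a b : Fin 3 → ℝ) (h : ∀ x, crossProduct a x = crossProduct b x) :
    a = b := by
  have h0 := congrFun (h (Pi.single 0 1)) 1
  have h1 := congrFun (h (Pi.single 0 1)) 2
  have h2 := congrFun (h (Pi.single 1 1)) 2
  simp [crossProduct, Pi.single_apply] at h0 h1 h2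
  funext i
  fin_cases i <;> simp <;> linarith

lemma mat_ext (M N : Matrix (Fin 3) (Fin 3) ℝ) (h : ∀ x, M *ᵥ x = N *ᵥ x) : M = N := by
  ext i j
  have := congrFun (h (Pi.single j 1)) i
  simpa [Matrix.mulVec_single] using this

lemma conj_mulVec (R Ω : Matrix (Fin 3) (Fin 3) ℝ) (ω : Fin 3 → ℝ)
    (hΩ : ∀ x, Ω.mulVec x = crossProduct ω x)
    (h1 : R * Rᵀ = 1) (h2 : Rᵀ * R = 1) (x : Fin 3 → ℝ) :
    (R⁻¹ * Ω * R) *ᵥ x = R.det • crossProduct (R⁻¹ *ᵥ ω) x := by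
  have hinv : R⁻¹ = Rᵀ := Matrix.inv_eq_right_inv h1
  have hRR : R * R⁻¹ = 1 := by rw [hinv]; exact h1
  have hRR' : R⁻¹ * R = 1 := by rw [hinv]; exact h2
  have hadj : Rᵀ.adjugate = R.det • R := by
    have h := Matrix.adjugate_mul Rᵀ
    calc Rᵀ.adjugate = Rᵀ.adjugate * (Rᵀ * R) := by rw [h2, mul_one]
      _ = (Rᵀ.adjugate * Rᵀ) * R := by rw [mul_assoc]
      _ = R.det • R := by rw [h, Matrix.det_transpose, smul_mul_assoc, one_mul]
  have hω : ω = R *ᵥ (R⁻¹ *ᵥ ω) := by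
    rw [Matrix.mulVec_mulVec, hRR, Matrix.one_mulVec]
  calc (R⁻¹ * Ω * R) *ᵥ x = R⁻¹ *ᵥ (Ω *ᵥ (R *ᵥ x)) := by
        simp [Matrix.mulVec_mulVec, mul_assoc]
    _ = R⁻¹ *ᵥ crossProduct (R *ᵥ (R⁻¹ *ᵥ ω)) (R *ᵥ x) := by rw [hΩ, ← hω]
    _ = R⁻¹ *ᵥ (Rᵀ.adjugate *ᵥ crossProduct (R⁻¹ *ᵥ ω) x) := by rw [cross_mulVec]
    _ = R.det • crossProduct (R⁻¹ *ᵥ ω) x := by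
        rw [hadj, Matrix.smul_mulVec, Matrix.mulVec_smul, Matrix.mulVec_mulVec,
          hRR', Matrix.one_mulVec]


/-- `G` is a symmetry group of the rotating-frame action, i.e.
`det(τ(g)) ρ(g)⁻¹ Ω ρ(g) = Ω` for all `g` (with `Ω ≠ 0` the antisymmetric matrix of
`ω ∈ ℝ³`), if and only if `ω` is a rotation axis: the line `ℝω` is `G`-invariant,
`ρ(g)ω = c(g)·ω` with `c(g) = ±1`, and `det(ρ(g))·c(g) = det(τ(g))` for all `g`. -/
theorem rotation_axis_iff_invariance
    {G : Type*} [Group G]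
    (ω : Fin 3 → ℝ) (hω : ω ≠ 0)
    (Ω : Matrix (Fin 3) (Fin 3) ℝ) (hΩ : ∀ x, Ω.mulVec x = crossProduct ω x)
    (ρ : G → Matrix (Fin 3) (Fin 3) ℝ)
    (hρ : ∀ g, ρ g ∈ Matrix.orthogonalGroup (Fin 3) ℝ)
    (τdet : G → ℝ) (hτ : ∀ g, τdet g = 1 ∨ τdet g = -1) :
    (∀ g, τdet g • ((ρ g)⁻¹ * Ω * ρ g) = Ω)
      ↔ (∀ g, ∃ c : ℝ, (c = 1 ∨ c = -1) ∧ (ρ g).mulVec ω = c • ω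
            ∧ (ρ g).det * c = τdet g) := by
  have horth : ∀ g, ρ g * (ρ g)ᵀ = 1 ∧ (ρ g)ᵀ * ρ g = 1 := by
    intro g
    have h := (Matrix.mem_orthogonalGroup_iff (Fin 3) ℝ).mp (hρ g)
    have h' := (Matrix.mem_orthogonalGroup_iff' (Fin 3) ℝ).mp (hρ g)
    exact ⟨h, h'⟩
  have hdet : ∀ g, (ρ g).det = 1 ∨ (ρ g).det = -1 := by
    intro g
    have := congrArg Matrix.det (horth g).2
    rw [Matrix.det_mul, Matrix.det_transpose, Matrix.det_one] at this
    exact mul_self_eq_one_iff.mp this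
  have hts : ∀ g, τdet g * τdet g = 1 := by
    intro g; rcases hτ g with h | h <;> rw [h] <;> norm_num
  have hds : ∀ g, (ρ g).det * (ρ g).det = 1 := by
    intro g; rcases hdet g with h | h <;> rw [h] <;> norm_num
  have hinv : ∀ g, (ρ g)⁻¹ = (ρ g)ᵀ := fun g => Matrix.inv_eq_right_inv (horth g).1
  constructor
  · intro H g
    set R := ρ g with hR
    set t := τdet g with ht
    set s := t * R.det with hs
    have hss : s * s = 1 := by
      have := hts g; have := hds g
      simp only [hs]; ring_nf; nlinarith [hts g, hds g]
    -- from H g derive s • (R⁻¹ *ᵥ ω) = ω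
    have key : ∀ x, crossProduct (s • (R⁻¹ *ᵥ ω)) x = crossProduct ω x := by
      intro x
      have h1 := congrArg (fun M => Matrix.mulVec M x) (H g)
      simp only [Matrix.smul_mulVec] at h1
      rw [conj_mulVec R Ω ω hΩ (horth g).1 (horth g).2 x, hΩ] at h1
      have e : crossProduct (s • (R⁻¹ *ᵥ ω)) x = s • (crossProduct (R⁻¹ *ᵥ ω)) x := by
        simp
      rw [e, hs, ht, mul_smul]
      exact h1
    have hkey : s • (R⁻¹ *ᵥ ω) = ω := cross_inj _ _ key
    have hRinvω : R⁻¹ *ᵥ ω = s • ω := by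
      have := congrArg (fun v => s • v) hkey
      simpa [smul_smul, hss] using this
    have hRω : R *ᵥ ω = s • ω := by
      have h2 : R *ᵥ (R⁻¹ *ᵥ ω) = ω := by
        rw [Matrix.mulVec_mulVec, hinv g, (horth g).1, Matrix.one_mulVec]
      rw [hRinvω, Matrix.mulVec_smul] at h2
      have := congrArg (fun v => s • v) h2
      simpa [smul_smul, hss] using this
    refine ⟨s, ?_, hRω, ?_⟩
    · rcases hτ g with h | h <;> rcases hdet g with h' | h' <;>
        rw [hs, ht, hR, h, h'] <;> norm_num
    · have : R.det * s = t * (R.det * R.det) := by rw [hs]; ring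
      rw [this, hds g, mul_one]
  · intro H g
    obtain ⟨c, hc, hRω, hdc⟩ := H g
    set R := ρ g with hR
    set t := τdet g with ht
    have hcc : c * c = 1 := by rcases hc with h | h <;> rw [h] <;> norm_num
    have hRinvω : R⁻¹ *ᵥ ω = c • ω := by
      have h2 : R⁻¹ *ᵥ (R *ᵥ ω) = ω := by
        rw [Matrix.mulVec_mulVec, hinv g, (horth g).2, Matrix.one_mulVec]
      rw [hRω, Matrix.mulVec_smul] at h2
      have := congrArg (fun v => c • v) h2
      simpa [smul_smul, hcc] using this
    apply mat_ext
    intro x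
    rw [Matrix.smul_mulVec, conj_mulVec R Ω ω hΩ (horth g).1 (horth g).2 x, hΩ,
      hRinvω]
    have e : crossProduct (c • ω) x = c • (crossProduct ω) x := by simp
    have h1 : t * (R.det * c) = 1 := by rw [hdc, hts g]
    rw [e, smul_smul, smul_smul, mul_assoc, h1, one_smul]
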